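/- arXiv:2605.14608 — 4 statements merged into one kernel-verified Lean document; each statement's English description precedes it below -/
import Mathlib

section
/- Let T₁ and T₂ be tensors of identical dimensions, with T₂ having no zero entries and T₂⁻¹ its elementwise inverse. Then rank_ε(T₁ ⊙ T₂⁻¹) ≥ rank_η(T₁) / rank_ε(T₂), where η = (max|T₁ ⊙ T₂⁻¹| + max|T₂|)·ε + ε². -/
/-- A CP (canonical polyadic) tensor of rank `R` built from factor matrices. -/
def cpTensor {ι₁ ι₂ ι₃ ι₄ : Type*} (R : ℕ)
    (A : ι₁ → Fin R → ℝ) (B : ι₂ → Fin R → ℝ) (C : ι₃ → Fin R → ℝ) (D : ι₄ → Fin R → ℝ) :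
    ι₁ → ι₂ → ι₃ → ι₄ → ℝ :=
  fun μ ν σ lam => ∑ r, A μ r * B ν r * C σ r * D lam r

/-- The Frobenius norm of a four-index tensor. -/
noncomputable def frob {ι₁ ι₂ ι₃ ι₄ : Type*} [Fintype ι₁] [Fintype ι₂] [Fintype ι₃] [Fintype ι₄]
    (T : ι₁ → ι₂ → ι₃ → ι₄ → ℝ) : ℝ :=
  Real.sqrt (∑ μ, ∑ ν, ∑ σ, ∑ lam, (T μ ν σ lam) ^ 2)

/-- The ε-effective CP rank of a four-index tensor: the minimal `R` such that some tensor
of CP rank `R` approximates `T` within `ε` in the Frobenius norm. -/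
noncomputable def erank {ι₁ ι₂ ι₃ ι₄ : Type*} [Fintype ι₁] [Fintype ι₂] [Fintype ι₃] [Fintype ι₄]
    (ε : ℝ) (T : ι₁ → ι₂ → ι₃ → ι₄ → ℝ) : ℕ :=
  sInf {R : ℕ | ∃ A B C D, frob (T - cpTensor R A B C D) ≤ ε}

/-- The maximum absolute entry of a four-index tensor. -/
noncomputable def maxAbs {ι₁ ι₂ ι₃ ι₄ : Type*} [Fintype ι₁] [Fintype ι₂] [Fintype ι₃] [Fintype ι₄]
    [Nonempty ι₁] [Nonempty ι₂] [Nonempty ι₃] [Nonempty ι₄]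
    (T : ι₁ → ι₂ → ι₃ → ι₄ → ℝ) : ℝ :=
  Finset.univ.sup' Finset.univ_nonempty
    (fun i : ι₁ × ι₂ × ι₃ × ι₄ => |T i.1 i.2.1 i.2.2.1 i.2.2.2|)

section helpers
variable {ι₁ ι₂ ι₃ ι₄ : Type*} [Fintype ι₁] [Fintype ι₂] [Fintype ι₃] [Fintype ι₄]

noncomputable def toE (T : ι₁ → ι₂ → ι₃ → ι₄ → ℝ) : EuclideanSpace ℝ (ι₁ × ι₂ × ι₃ × ι₄) :=
  WithLp.toLp 2 (fun i : ι₁ × ι₂ × ι₃ × ι₄ => T i.1 i.2.1 i.2.2.1 i.2.2.2)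

lemma frob_eq_norm (T : ι₁ → ι₂ → ι₃ → ι₄ → ℝ) : frob T = ‖toE T‖ := by
  rw [EuclideanSpace.norm_eq]
  simp [frob, toE, Fintype.sum_prod_type, Real.norm_eq_abs, sq_abs]

lemma frob_eq_sqrt (T : ι₁ → ι₂ → ι₃ → ι₄ → ℝ) :
    frob T = Real.sqrt (∑ i : ι₁ × ι₂ × ι₃ × ι₄, (T i.1 i.2.1 i.2.2.1 i.2.2.2) ^ 2) := by
  simp [frob, Fintype.sum_prod_type]

lemma frob_nonneg (T : ι₁ → ι₂ → ι₃ → ι₄ → ℝ) : 0 ≤ frob T := Real.sqrt_nonneg _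

lemma frob_add_le (X Y : ι₁ → ι₂ → ι₃ → ι₄ → ℝ) : frob (X + Y) ≤ frob X + frob Y := by
  rw [frob_eq_norm, frob_eq_norm, frob_eq_norm]
  rw [show toE (X + Y) = toE X + toE Y by ext i; simp [toE]]
  exact norm_add_le (toE X) (toE Y)

variable [Nonempty ι₁] [Nonempty ι₂] [Nonempty ι₃] [Nonempty ι₄]

lemma le_maxAbs (T : ι₁ → ι₂ → ι₃ → ι₄ → ℝ) (μ ν σ lam) :
    |T μ ν σ lam| ≤ maxAbs T :=
  Finset.le_sup' (fun i : ι₁ × ι₂ × ι₃ × ι₄ => |T i.1 i.2.1 i.2.2.1 i.2.2.2|)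
    (Finset.mem_univ (μ, ν, σ, lam))

lemma maxAbs_nonneg (T : ι₁ → ι₂ → ι₃ → ι₄ → ℝ) : 0 ≤ maxAbs T := by
  obtain ⟨μ⟩ := ‹Nonempty ι₁›; obtain ⟨ν⟩ := ‹Nonempty ι₂›
  obtain ⟨σ⟩ := ‹Nonempty ι₃›; obtain ⟨lam⟩ := ‹Nonempty ι₄›
  exact (abs_nonneg _).trans (le_maxAbs T μ ν σ lam)

/-- frob of Hadamard product bounded by `maxAbs A * frob B`. -/
lemma frob_had_le_maxAbs (A B : ι₁ → ι₂ → ι₃ → ι₄ → ℝ) :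
    frob (fun μ ν σ lam => A μ ν σ lam * B μ ν σ lam) ≤ maxAbs A * frob B := by
  rw [frob_eq_sqrt, frob_eq_sqrt]
  rw [show maxAbs A * Real.sqrt (∑ i : ι₁ × ι₂ × ι₃ × ι₄, (B i.1 i.2.1 i.2.2.1 i.2.2.2) ^ 2)
      = Real.sqrt ((maxAbs A) ^ 2 * ∑ i : ι₁ × ι₂ × ι₃ × ι₄, (B i.1 i.2.1 i.2.2.1 i.2.2.2) ^ 2)
    from by rw [Real.sqrt_mul (sq_nonneg _), Real.sqrt_sq (maxAbs_nonneg A)]]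
  apply Real.sqrt_le_sqrt
  rw [Finset.mul_sum]
  apply Finset.sum_le_sum
  intro i _
  rw [mul_pow]
  apply mul_le_mul_of_nonneg_right _ (sq_nonneg _)
  rw [← sq_abs (A _ _ _ _)]
  exact pow_le_pow_left₀ (abs_nonneg _) (le_maxAbs A _ _ _ _) 2

/-- frob of Hadamard product bounded by the product of frobs. -/
lemma frob_had_le_frob (A B : ι₁ → ι₂ → ι₃ → ι₄ → ℝ) :
    frob (fun μ ν σ lam => A μ ν σ lam * B μ ν σ lam) ≤ frob A * frob B := by
  rw [frob_eq_sqrt, frob_eq_sqrt, frob_eq_sqrt, ← Real.sqrt_mul (by positivity)]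
  apply Real.sqrt_le_sqrt
  rw [Finset.sum_mul]
  refine Finset.sum_le_sum (fun i _ => ?_)
  rw [mul_pow]
  exact mul_le_mul_of_nonneg_left
    (Finset.single_le_sum (fun j _ => sq_nonneg ((B j.1 j.2.1 j.2.2.1 j.2.2.2)))
      (Finset.mem_univ i)) (sq_nonneg _)

/-- Every tensor has an exact CP representation, so the approximation set is nonempty. -/
lemma erank_set_nonempty (T : ι₁ → ι₂ → ι₃ → ι₄ → ℝ) {ε : ℝ} (hε : 0 ≤ ε) :
    {R : ℕ | ∃ A B C D, frob (T - cpTensor R A B C D) ≤ ε}.Nonempty := by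
  classical
  set R := Fintype.card (ι₁ × ι₂ × ι₃ × ι₄) with hR
  set e : Fin R ≃ ι₁ × ι₂ × ι₃ × ι₄ := (Fintype.equivFin _).symm with he
  refine ⟨R, (fun μ r => if (e r).1 = μ then 1 else 0),
    (fun ν r => if (e r).2.1 = ν then 1 else 0),
    (fun σ r => if (e r).2.2.1 = σ then 1 else 0),
    (fun lam r => if (e r).2.2.2 = lam then T (e r).1 (e r).2.1 (e r).2.2.1 lam else 0), ?_⟩
  have hT : (T - cpTensor R
      (fun μ r => if (e r).1 = μ then 1 else 0)
      (fun ν r => if (e r).2.1 = ν then 1 else 0)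
      (fun σ r => if (e r).2.2.1 = σ then 1 else 0)
      (fun lam r => if (e r).2.2.2 = lam then T (e r).1 (e r).2.1 (e r).2.2.1 lam else 0)) = 0 := by
    funext μ ν σ lam
    have key : cpTensor R
        (fun μ r => if (e r).1 = μ then 1 else 0)
        (fun ν r => if (e r).2.1 = ν then 1 else 0)
        (fun σ r => if (e r).2.2.1 = σ then 1 else 0)
        (fun lam r => if (e r).2.2.2 = lam then T (e r).1 (e r).2.1 (e r).2.2.1 lam else 0)
        μ ν σ lam = T μ ν σ lam := by
      unfold cpTensor
      rw [show (∑ r : Fin R,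
          (if (e r).1 = μ then (1:ℝ) else 0) * (if (e r).2.1 = ν then 1 else 0) *
          (if (e r).2.2.1 = σ then 1 else 0) *
          (if (e r).2.2.2 = lam then T (e r).1 (e r).2.1 (e r).2.2.1 lam else 0))
        = ∑ p : ι₁ × ι₂ × ι₃ × ι₄,
          (if p.1 = μ then (1:ℝ) else 0) * (if p.2.1 = ν then 1 else 0) *
          (if p.2.2.1 = σ then 1 else 0) *
          (if p.2.2.2 = lam then T p.1 p.2.1 p.2.2.1 lam else 0)
        from Equiv.sum_comp e (fun p : ι₁ × ι₂ × ι₃ × ι₄ =>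
          (if p.1 = μ then (1:ℝ) else 0) * (if p.2.1 = ν then 1 else 0) *
          (if p.2.2.1 = σ then 1 else 0) *
          (if p.2.2.2 = lam then T p.1 p.2.1 p.2.2.1 lam else 0))]
      rw [Fintype.sum_eq_single (μ, ν, σ, lam)]
      · simp
      · intro p hp
        obtain ⟨a, b, c, d⟩ := p
        split_ifs <;> simp_all
    simp [Pi.sub_apply, key, sub_self]
  rw [hT]
  have : frob (0 : ι₁ → ι₂ → ι₃ → ι₄ → ℝ) = 0 := by
    rw [frob_eq_sqrt]; simp
  linarith

/-- Hadamard product of two CP tensors is a CP tensor of the product rank. -/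
lemma cpTensor_had {R₁ R₂ : ℕ}
    (A : ι₁ → Fin R₁ → ℝ) (B : ι₂ → Fin R₁ → ℝ) (C : ι₃ → Fin R₁ → ℝ) (D : ι₄ → Fin R₁ → ℝ)
    (A' : ι₁ → Fin R₂ → ℝ) (B' : ι₂ → Fin R₂ → ℝ) (C' : ι₃ → Fin R₂ → ℝ) (D' : ι₄ → Fin R₂ → ℝ) :
    (fun μ ν σ lam => cpTensor R₁ A B C D μ ν σ lam * cpTensor R₂ A' B' C' D' μ ν σ lam)
    = cpTensor (R₁ * R₂)
        (fun μ r => A μ (finProdFinEquiv.symm r).1 * A' μ (finProdFinEquiv.symm r).2)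
        (fun ν r => B ν (finProdFinEquiv.symm r).1 * B' ν (finProdFinEquiv.symm r).2)
        (fun σ r => C σ (finProdFinEquiv.symm r).1 * C' σ (finProdFinEquiv.symm r).2)
        (fun lam r => D lam (finProdFinEquiv.symm r).1 * D' lam (finProdFinEquiv.symm r).2) := by
  funext μ ν σ lam
  unfold cpTensor
  rw [show (∑ r : Fin (R₁ * R₂),
      A μ (finProdFinEquiv.symm r).1 * A' μ (finProdFinEquiv.symm r).2 *
      (B ν (finProdFinEquiv.symm r).1 * B' ν (finProdFinEquiv.symm r).2) *
      (C σ (finProdFinEquiv.symm r).1 * C' σ (finProdFinEquiv.symm r).2) *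
      (D lam (finProdFinEquiv.symm r).1 * D' lam (finProdFinEquiv.symm r).2))
    = ∑ p : Fin R₁ × Fin R₂,
      A μ p.1 * A' μ p.2 * (B ν p.1 * B' ν p.2) * (C σ p.1 * C' σ p.2) *
      (D lam p.1 * D' lam p.2)
    from Equiv.sum_comp (finProdFinEquiv.symm : Fin (R₁ * R₂) ≃ Fin R₁ × Fin R₂)
      (fun p : Fin R₁ × Fin R₂ =>
        A μ p.1 * A' μ p.2 * (B ν p.1 * B' ν p.2) * (C σ p.1 * C' σ p.2) *
        (D lam p.1 * D' lam p.2))]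
  rw [Finset.sum_mul_sum, Fintype.sum_prod_type]
  refine Finset.sum_congr rfl fun i _ => Finset.sum_congr rfl fun j _ => ?_
  ring

end helpers

/-- If `T₂` has no zero entries and `T₂⁻¹` is its elementwise inverse, then
`rank_ε(T₁ ⊙ T₂⁻¹) ≥ rank_η(T₁) / rank_ε(T₂)` with
`η = (max|T₁ ⊙ T₂⁻¹| + max|T₂|)·ε + ε²`. -/
theorem erank_hadamard_inv_ge {ι₁ ι₂ ι₃ ι₄ : Type*}
    [Fintype ι₁] [Fintype ι₂] [Fintype ι₃] [Fintype ι₄]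
    [Nonempty ι₁] [Nonempty ι₂] [Nonempty ι₃] [Nonempty ι₄]
    (T₁ T₂ : ι₁ → ι₂ → ι₃ → ι₄ → ℝ)
    (h₂ : ∀ μ ν σ lam, T₂ μ ν σ lam ≠ 0) (ε : ℝ) (hε : 0 ≤ ε) :
    (erank ((maxAbs (fun μ ν σ lam => T₁ μ ν σ lam / T₂ μ ν σ lam) + maxAbs T₂) * ε + ε ^ 2)
        T₁ : ℝ) / (erank ε T₂ : ℝ) ≤
      (erank ε (fun μ ν σ lam => T₁ μ ν σ lam / T₂ μ ν σ lam) : ℝ) := by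
  classical
  set S : ι₁ → ι₂ → ι₃ → ι₄ → ℝ := fun μ ν σ lam => T₁ μ ν σ lam / T₂ μ ν σ lam with hS
  set η : ℝ := (maxAbs S + maxAbs T₂) * ε + ε ^ 2 with hη
  -- optimal approximants
  have h1 : ∃ A B C D, frob (S - cpTensor (erank ε S) A B C D) ≤ ε :=
    Nat.sInf_mem (erank_set_nonempty S hε)
  have h2 : ∃ A B C D, frob (T₂ - cpTensor (erank ε T₂) A B C D) ≤ ε :=
    Nat.sInf_mem (erank_set_nonempty T₂ hε)
  obtain ⟨A, B, C, D, hX⟩ := h1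
  obtain ⟨A', B', C', D', hY⟩ := h2
  set X := cpTensor (erank ε S) A B C D with hXdef
  set Y := cpTensor (erank ε T₂) A' B' C' D' with hYdef
  -- key: erank η T₁ ≤ R₁ * R₂
  have key : erank η T₁ ≤ erank ε S * erank ε T₂ := by
    apply Nat.sInf_le
    refine ⟨fun μ r => A μ (finProdFinEquiv.symm r).1 * A' μ (finProdFinEquiv.symm r).2,
      fun ν r => B ν (finProdFinEquiv.symm r).1 * B' ν (finProdFinEquiv.symm r).2,
      fun σ r => C σ (finProdFinEquiv.symm r).1 * C' σ (finProdFinEquiv.symm r).2,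
      fun lam r => D lam (finProdFinEquiv.symm r).1 * D' lam (finProdFinEquiv.symm r).2, ?_⟩
    rw [← cpTensor_had A B C D A' B' C' D']
    show frob (T₁ - fun μ ν σ lam => X μ ν σ lam * Y μ ν σ lam) ≤ η
    -- decompose T₁ - X ⊙ Y
    have hdec : (T₁ - fun μ ν σ lam => X μ ν σ lam * Y μ ν σ lam)
        = (fun μ ν σ lam => S μ ν σ lam * (T₂ - Y) μ ν σ lam)
        + (fun μ ν σ lam => (S - X) μ ν σ lam * T₂ μ ν σ lam)
        + (fun μ ν σ lam => (S - X) μ ν σ lam * (-(T₂ - Y)) μ ν σ lam) := by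
      funext μ ν σ lam
      have hST : S μ ν σ lam * T₂ μ ν σ lam = T₁ μ ν σ lam := by
        rw [hS]
        exact div_mul_cancel₀ (T₁ μ ν σ lam) (h₂ μ ν σ lam)
      have h := h₂ μ ν σ lam
      simp only [Pi.add_apply, Pi.sub_apply, Pi.neg_apply, hS]
      field_simp
      ring
    rw [hdec]
    have t1 : frob (fun μ ν σ lam => S μ ν σ lam * (T₂ - Y) μ ν σ lam)
        ≤ maxAbs S * ε :=
      (frob_had_le_maxAbs S (T₂ - Y)).trans
        (mul_le_mul_of_nonneg_left hY (maxAbs_nonneg S))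
    have t2 : frob (fun μ ν σ lam => (S - X) μ ν σ lam * T₂ μ ν σ lam)
        ≤ maxAbs T₂ * ε := by
      have comm : (fun μ ν σ lam => (S - X) μ ν σ lam * T₂ μ ν σ lam)
          = (fun μ ν σ lam => T₂ μ ν σ lam * (S - X) μ ν σ lam) := by
        funext μ ν σ lam; ring
      rw [comm]
      exact (frob_had_le_maxAbs T₂ (S - X)).trans
        (mul_le_mul_of_nonneg_left hX (maxAbs_nonneg T₂))
    have t3 : frob (fun μ ν σ lam => (S - X) μ ν σ lam * (-(T₂ - Y)) μ ν σ lam)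
        ≤ ε ^ 2 := by
      have hneg : frob (-(T₂ - Y)) = frob (T₂ - Y) := by
        rw [frob_eq_norm, frob_eq_norm]
        rw [show toE (-(T₂ - Y)) = -toE (T₂ - Y) by ext i; simp [toE]]
        exact norm_neg (toE (T₂ - Y))
      calc frob (fun μ ν σ lam => (S - X) μ ν σ lam * (-(T₂ - Y)) μ ν σ lam)
          ≤ frob (S - X) * frob (-(T₂ - Y)) := frob_had_le_frob _ _
        _ = frob (S - X) * frob (T₂ - Y) := by rw [hneg]
        _ ≤ ε * ε := mul_le_mul hX hY (frob_nonneg _) hε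
        _ = ε ^ 2 := (sq ε).symm
    calc frob ((fun μ ν σ lam => S μ ν σ lam * (T₂ - Y) μ ν σ lam)
          + (fun μ ν σ lam => (S - X) μ ν σ lam * T₂ μ ν σ lam)
          + (fun μ ν σ lam => (S - X) μ ν σ lam * (-(T₂ - Y)) μ ν σ lam))
        ≤ frob ((fun μ ν σ lam => S μ ν σ lam * (T₂ - Y) μ ν σ lam)
          + (fun μ ν σ lam => (S - X) μ ν σ lam * T₂ μ ν σ lam))
          + frob (fun μ ν σ lam => (S - X) μ ν σ lam * (-(T₂ - Y)) μ ν σ lam) :=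
          frob_add_le _ _
      _ ≤ frob (fun μ ν σ lam => S μ ν σ lam * (T₂ - Y) μ ν σ lam)
          + frob (fun μ ν σ lam => (S - X) μ ν σ lam * T₂ μ ν σ lam)
          + frob (fun μ ν σ lam => (S - X) μ ν σ lam * (-(T₂ - Y)) μ ν σ lam) := by
          have := frob_add_le (fun μ ν σ lam => S μ ν σ lam * (T₂ - Y) μ ν σ lam)
            (fun μ ν σ lam => (S - X) μ ν σ lam * T₂ μ ν σ lam)
          linarith
      _ ≤ maxAbs S * ε + maxAbs T₂ * ε + ε ^ 2 := by linarith
      _ = η := by rw [hη]; ring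
  -- conclude
  rcases Nat.eq_zero_or_pos (erank ε T₂) with h0 | hpos
  · rw [h0]
    simp
  · have hpos' : (0 : ℝ) < (erank ε T₂ : ℝ) := by exact_mod_cast hpos
    rw [div_le_iff₀ hpos']
    calc (erank η T₁ : ℝ) ≤ ((erank ε S * erank ε T₂ : ℕ) : ℝ) := by exact_mod_cast key
      _ = (erank ε S : ℝ) * (erank ε T₂ : ℝ) := by push_cast; ring
end

section
/- Let S_A and S_B be real symmetric positive semidefinite matrices, and let M = S_A ⊗ S_B be their Kronecker product. For 0 < ε < 1, if rank_{√ε}(S_A) = R_A and rank_{√ε}(S_B) = R_B (effective ranks in Frobenius norm), with R_A, R_B > 1, then rank_ε(M) ≥ R_A · R_B. -/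
/-- The Frobenius norm of a matrix. -/
noncomputable def frobM {m n : Type*} [Fintype m] [Fintype n] (A : Matrix m n ℝ) : ℝ :=
  Real.sqrt (∑ i, ∑ j, (A i j) ^ 2)

/-- The ε-effective rank of a matrix: the minimal `K` such that some matrix of rank at most
`K` approximates `A` within `ε` in the Frobenius norm. -/
noncomputable def erankM {m n : Type*} [Fintype m] [Fintype n] (ε : ℝ) (A : Matrix m n ℝ) : ℕ :=
  sInf {K : ℕ | ∃ B : Matrix m n ℝ, B.rank ≤ K ∧ frobM (A - B) ≤ ε}

open Matrix

/-- Sum of squares of the entries of a matrix (the squared Frobenius norm). -/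
noncomputable def fsq {m n : Type*} [Fintype m] [Fintype n] (A : Matrix m n ℝ) : ℝ :=
  ∑ i, ∑ j, (A i j) ^ 2

lemma fsq_eq_trace {m n : Type*} [Fintype m] [Fintype n] (A : Matrix m n ℝ) :
    fsq A = Matrix.trace (Aᵀ * A) := by
  simp [fsq, Matrix.trace, Matrix.mul_apply, Matrix.diag, sq]
  exact Finset.sum_comm

lemma fsq_nonneg {m n : Type*} [Fintype m] [Fintype n] (A : Matrix m n ℝ) : 0 ≤ fsq A :=
  Finset.sum_nonneg fun _ _ => Finset.sum_nonneg fun _ _ => sq_nonneg _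

lemma frob_sq {m n : Type*} [Fintype m] [Fintype n] (A : Matrix m n ℝ) :
    (frobM A) ^ 2 = fsq A := Real.sq_sqrt (fsq_nonneg A)

lemma frobM_nonneg {m n : Type*} [Fintype m] [Fintype n] (A : Matrix m n ℝ) :
    0 ≤ frobM A := Real.sqrt_nonneg _

lemma fsq_unit {m : Type*} [Fintype m] [DecidableEq m] (U Y : Matrix m m ℝ)
    (hU : Uᵀ * U = 1) : fsq (U * Y * Uᵀ) = fsq Y := by
  have hU' : U * Uᵀ = 1 := mul_eq_one_comm.mp hU
  rw [fsq_eq_trace, fsq_eq_trace]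
  rw [show (U * Y * Uᵀ)ᵀ = U * Yᵀ * Uᵀ by simp [Matrix.transpose_mul, mul_assoc]]
  rw [show (U * Yᵀ * Uᵀ) * (U * Y * Uᵀ) = U * (Yᵀ * (Uᵀ * U) * Y) * Uᵀ by
    simp only [mul_assoc]]
  rw [hU, mul_one, Matrix.trace_mul_cycle, ← mul_assoc, hU, one_mul]

lemma fsq_diagonal {m : Type*} [Fintype m] [DecidableEq m] (v : m → ℝ) :
    fsq (diagonal v) = ∑ i, v i ^ 2 := by
  simp [fsq, Matrix.diagonal_apply, Finset.sum_ite_eq', sq]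

/-- Eckart–Young achievability: truncating the spectral decomposition to the eigenvalues in `T`
gives a matrix of rank at most `T.card` whose squared Frobenius distance to `S` is the sum of
the squares of the remaining eigenvalues. -/
lemma achiev {m : Type*} [Fintype m] [DecidableEq m] {S : Matrix m m ℝ}
    (hS : S.IsHermitian) (T : Finset m) :
    ∃ B : Matrix m m ℝ, B.rank ≤ T.card ∧
      fsq (S - B) = ∑ r ∈ Tᶜ, (hS.eigenvalues r) ^ 2 := by
  set U : Matrix m m ℝ := (hS.eigenvectorUnitary : Matrix m m ℝ) with hUdef
  have hUmem := hS.eigenvectorUnitary.2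
  have hU : Uᵀ * U = 1 := by
    have := (Matrix.mem_unitaryGroup_iff').mp hUmem
    simpa [Matrix.star_eq_conjTranspose, Matrix.conjTranspose_eq_transpose_of_trivial] using this
  have hspec : S = U * diagonal hS.eigenvalues * Uᵀ := by
    have := hS.spectral_theorem
    simpa [Matrix.star_eq_conjTranspose, Matrix.conjTranspose_eq_transpose_of_trivial] using this
  classical
  refine ⟨U * diagonal (fun r => if r ∈ T then hS.eigenvalues r else 0) * Uᵀ, ?_, ?_⟩
  · calc (U * diagonal (fun r => if r ∈ T then hS.eigenvalues r else 0) * Uᵀ).rank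
        ≤ (diagonal (fun r => if r ∈ T then hS.eigenvalues r else 0)).rank := by
          apply le_trans (Matrix.rank_mul_le_left _ _)
          exact Matrix.rank_mul_le_right _ _
      _ ≤ T.card := by
          rw [Matrix.rank_diagonal]
          have : ∀ r : m, (fun r => if r ∈ T then hS.eigenvalues r else 0) r ≠ 0 → r ∈ T := by
            intro r h; by_contra hr; simp [hr] at h
          calc Fintype.card {i // (if i ∈ T then hS.eigenvalues i else 0) ≠ 0}
              ≤ Fintype.card {i // i ∈ T} :=
                Fintype.card_subtype_mono _ _ (by intro r h; exact this r h)
            _ = T.card := Fintype.card_coe T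
  · have : S - U * diagonal (fun r => if r ∈ T then hS.eigenvalues r else 0) * Uᵀ
        = U * diagonal (fun r => if r ∈ T then 0 else hS.eigenvalues r) * Uᵀ := by
      nth_rewrite 1 [hspec]
      rw [← Matrix.sub_mul, ← Matrix.mul_sub, Matrix.diagonal_sub]
      have hfun : (fun i => hS.eigenvalues i - if i ∈ T then hS.eigenvalues i else 0)
          = fun r => if r ∈ T then (0:ℝ) else hS.eigenvalues r := by
        funext r; by_cases h : r ∈ T <;> simp [h]
      rw [hfun]
    rw [this, fsq_unit _ _ hU, fsq_diagonal]
    rw [← Finset.sum_compl_add_sum T]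
    have h1 : ∑ r ∈ T, (if r ∈ T then (0:ℝ) else hS.eigenvalues r) ^ 2 = 0 :=
      Finset.sum_eq_zero fun r hr => by simp [hr]
    have h2 : ∑ r ∈ Tᶜ, (if r ∈ T then (0:ℝ) else hS.eigenvalues r) ^ 2
        = ∑ r ∈ Tᶜ, (hS.eigenvalues r) ^ 2 :=
      Finset.sum_congr rfl fun r hr => by simp [Finset.mem_compl.mp hr]
    rw [h1, h2, add_zero]

/-- If `0 ≤ c ≤ 1` sums to the natural number `d`, then `∑ α j * c j` dominates the sum of `α`
over some subset of cardinality `d`. -/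
lemma select_subset {ι : Type*} [Fintype ι] [DecidableEq ι] (α c : ι → ℝ)
    (hα : ∀ j, 0 ≤ α j) (hc0 : ∀ j, 0 ≤ c j) (hc1 : ∀ j, c j ≤ 1) (d : ℕ)
    (hsum : ∑ j, c j = d) (hd : d ≤ Fintype.card ι) :
    ∃ J : Finset ι, J.card = d ∧ ∑ j ∈ J, α j ≤ ∑ j, α j * c j := by
  classical
  have hne : (Finset.univ.powersetCard d : Finset (Finset ι)).Nonempty := by
    rw [Finset.powersetCard_nonempty]
    simpa using hd
  obtain ⟨J, hJmem, hJmin⟩ := Finset.exists_min_image _ (fun J => ∑ j ∈ J, α j) hne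
  rw [Finset.mem_powersetCard_univ] at hJmem
  refine ⟨J, hJmem, ?_⟩
  rcases J.eq_empty_or_nonempty with hJe | hJne
  · rw [hJe]; simp
    exact Finset.sum_nonneg fun j _ => mul_nonneg (hα j) (hc0 j)
  have hd1 : 1 ≤ d := hJmem ▸ Finset.card_pos.mpr hJne
  have hpair : ∀ j ∈ J, ∀ j' ∉ J, α j ≤ α j' := by
    intro j hj j' hj'
    have hmem' : insert j' (J.erase j) ∈ Finset.univ.powersetCard d := by
      rw [Finset.mem_powersetCard_univ, Finset.card_insert_of_notMem
        (fun h => hj' (Finset.mem_of_mem_erase h)), Finset.card_erase_of_mem hj, hJmem]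
      omega
    have := hJmin _ hmem'
    rw [Finset.sum_insert (fun h => hj' (Finset.mem_of_mem_erase h)),
      Finset.sum_erase_eq_sub hj] at this
    linarith
  set t : ℝ := (J.image α).max' (hJne.image α) with ht
  obtain ⟨j0, hj0J, hj0⟩ : ∃ j0 ∈ J, α j0 = t := by
    have := (J.image α).max'_mem (hJne.image α)
    rw [Finset.mem_image] at this
    obtain ⟨j0, h1, h2⟩ := this
    exact ⟨j0, h1, h2⟩
  have ht0 : 0 ≤ t := hj0 ▸ hα j0
  have htub : ∀ j ∈ J, α j ≤ t := fun j hj =>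
    Finset.le_max' _ _ (Finset.mem_image_of_mem α hj)
  have htlb : ∀ j' ∉ J, t ≤ α j' := fun j' hj' => hj0 ▸ hpair j0 hj0J j' hj'
  have expand : ∑ j, α j * c j - ∑ j ∈ J, α j
      = ∑ j ∈ J, (α j * (c j - 1)) + ∑ j ∈ Jᶜ, α j * c j := by
    rw [← Finset.sum_add_sum_compl J (fun j => α j * c j)]
    rw [Finset.sum_congr rfl (fun j (_ : j ∈ J) => mul_sub (α j) (c j) 1)]
    rw [Finset.sum_sub_distrib]
    ring_nf
  have hsum' : ∑ j ∈ J, c j + ∑ j ∈ Jᶜ, c j = (d : ℝ) := by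
    rw [Finset.sum_add_sum_compl, hsum]
  have lb1 : ∀ j ∈ J, t * (c j - 1) ≤ α j * (c j - 1) := fun j hj =>
    mul_le_mul_of_nonpos_right (htub j hj) (by linarith [hc1 j])
  have lb2 : ∀ j ∈ Jᶜ, t * c j ≤ α j * c j := fun j hj =>
    mul_le_mul_of_nonneg_right (htlb j (Finset.mem_compl.mp hj)) (hc0 j)
  have : t * ((∑ j ∈ J, c j) - J.card) + t * ∑ j ∈ Jᶜ, c j
      ≤ ∑ j ∈ J, (α j * (c j - 1)) + ∑ j ∈ Jᶜ, α j * c j := by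
    apply add_le_add
    · rw [show (∑ j ∈ J, c j) - (J.card:ℝ) = ∑ j ∈ J, (c j - 1) by
        rw [Finset.sum_sub_distrib]; simp]
      rw [Finset.mul_sum]
      exact Finset.sum_le_sum lb1
    · rw [Finset.mul_sum]
      exact Finset.sum_le_sum lb2
  have hz : t * ((∑ j ∈ J, c j) - J.card) + t * ∑ j ∈ Jᶜ, c j = 0 := by
    rw [hJmem]
    nlinarith [hsum']
  linarith [expand, this, hz]

/-- Key pigeonhole estimate for the tail of a product family. -/
lemma prod_tail {m n : Type*} [Fintype m] [Fintype n] [DecidableEq m] [DecidableEq n]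
    (α : m → ℝ) (β : n → ℝ) (hα : ∀ r, 0 ≤ α r) (hβ : ∀ s, 0 ≤ β s)
    (ε : ℝ) (hε : 0 < ε) (RA RB : ℕ)
    (hA : ∀ T : Finset m, T.card ≤ RA - 1 → ε < ∑ r ∈ Tᶜ, α r)
    (hB : ∀ T : Finset n, T.card ≤ RB - 1 → ε < ∑ s ∈ Tᶜ, β s)
    (T : Finset (m × n)) (hT : T.card < RA * RB) :
    ε * ε < ∑ p ∈ Tᶜ, α p.1 * β p.2 := by
  classical
  set row : m → Finset n := fun r => (T.filter (fun p => p.1 = r)).image Prod.snd with hrow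
  have hrow_mem : ∀ r s, s ∈ row r ↔ (r, s) ∈ T := by
    intro r s
    simp only [hrow, Finset.mem_image, Finset.mem_filter]
    constructor
    · rintro ⟨⟨pr, ps⟩, ⟨hp, rfl⟩, rfl⟩; exact hp
    · intro h; exact ⟨(r, s), ⟨h, rfl⟩, rfl⟩
  set bad : Finset m := Finset.univ.filter (fun r => RB ≤ (row r).card) with hbad
  have hfib : T.card = ∑ r, (T.filter (fun p => p.1 = r)).card :=
    Finset.card_eq_sum_card_fiberwise (fun x _ => Finset.mem_univ x.1)
  have hbadcard : bad.card * RB ≤ T.card := by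
    calc bad.card * RB = ∑ _r ∈ bad, RB := by rw [Finset.sum_const, smul_eq_mul]
      _ ≤ ∑ r ∈ bad, (row r).card := Finset.sum_le_sum (fun r hr => by
          simpa [hbad] using (Finset.mem_filter.mp hr).2)
      _ ≤ ∑ r ∈ bad, (T.filter (fun p => p.1 = r)).card :=
          Finset.sum_le_sum (fun r _ => Finset.card_image_le)
      _ ≤ ∑ r, (T.filter (fun p => p.1 = r)).card :=
          Finset.sum_le_sum_of_subset (Finset.subset_univ bad)
      _ = T.card := hfib.symm
  have hbadRA : bad.card ≤ RA - 1 := by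
    have : bad.card * RB < RA * RB := lt_of_le_of_lt hbadcard hT
    have hlt : bad.card < RA := by
      by_contra h
      push_neg at h
      exact absurd (Nat.mul_le_mul_right RB h) (not_le.mpr this)
    omega
  have hdec : ∑ p ∈ Tᶜ, α p.1 * β p.2 = ∑ r, ∑ s ∈ (row r)ᶜ, α r * β s := by
    calc ∑ p ∈ Tᶜ, α p.1 * β p.2
        = ∑ p ∈ Finset.univ ∩ Tᶜ, α p.1 * β p.2 := by rw [Finset.univ_inter]
      _ = ∑ p : m × n, if p ∈ Tᶜ then α p.1 * β p.2 else 0 :=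
          (Finset.sum_ite_mem _ _ _).symm
      _ = ∑ r, ∑ s, if (r, s) ∈ Tᶜ then α r * β s else 0 := Fintype.sum_prod_type _
      _ = ∑ r, ∑ s ∈ (row r)ᶜ, α r * β s := by
          refine Finset.sum_congr rfl (fun r _ => ?_)
          rw [← Finset.univ_inter ((row r)ᶜ), ← Finset.sum_ite_mem]
          exact Finset.sum_congr rfl (fun s _ => by simp [Finset.mem_compl, hrow_mem])
  rw [hdec]
  have step1 : ∑ r ∈ badᶜ, α r * ε ≤ ∑ r, ∑ s ∈ (row r)ᶜ, α r * β s := by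
    calc ∑ r ∈ badᶜ, α r * ε ≤ ∑ r ∈ badᶜ, ∑ s ∈ (row r)ᶜ, α r * β s := by
          apply Finset.sum_le_sum
          intro r hr
          rw [← Finset.mul_sum]
          apply mul_le_mul_of_nonneg_left _ (hα r)
          apply le_of_lt
          apply hB
          have := Finset.mem_compl.mp hr
          rw [hbad, Finset.mem_filter] at this
          push_neg at this
          have := this (Finset.mem_univ r)
          omega
      _ ≤ ∑ r, ∑ s ∈ (row r)ᶜ, α r * β s := by
          apply Finset.sum_le_sum_of_subset_of_nonneg (Finset.subset_univ _)
          intro r _ _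
          exact Finset.sum_nonneg (fun s _ => mul_nonneg (hα r) (hβ s))
  have step2 : ε * ε < ∑ r ∈ badᶜ, α r * ε := by
    have := hA bad hbadRA
    calc ε * ε < (∑ r ∈ badᶜ, α r) * ε := mul_lt_mul_of_pos_right this hε
      _ = ∑ r ∈ badᶜ, α r * ε := by rw [Finset.sum_mul]
  linarith

lemma psd_trace_nonneg {ι : Type*} [Fintype ι] [DecidableEq ι] {S : Matrix ι ι ℝ}
    (hS : S.PosSemidef) : 0 ≤ Matrix.trace S := by
  apply Finset.sum_nonneg
  intro j _
  have := hS.dotProduct_mulVec_nonneg (Pi.single j 1)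
  simpa [dotProduct, Matrix.mulVec, Pi.single_apply, Matrix.diag] using this

/-- Eckart–Young lower bound (in the form needed here): if `M = U diag(a) Uᵀ` with `U` orthogonal
and `B` has rank at most `K`, then the squared Frobenius distance from `M` to `B` is at least
the sum of `a j ^ 2` over the complement of some set of at most `K` indices. -/
lemma lower_bound {ι : Type*} [Fintype ι] [DecidableEq ι]
    (M U B : Matrix ι ι ℝ) (a : ι → ℝ) (hU : Uᵀ * U = 1)
    (hM : M = U * Matrix.diagonal a * Uᵀ) (K : ℕ) (hB : B.rank ≤ K) :
    ∃ T : Finset ι, T.card ≤ K ∧ ∑ j ∈ Tᶜ, (a j) ^ 2 ≤ fsq (M - B) := by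
  classical
  set g := Matrix.toEuclideanLin B with hg
  have hrank : B.rank = Module.finrank ℝ (LinearMap.range g) := by
    rw [hg, Matrix.toEuclideanLin_eq_toLin]
    exact Matrix.rank_eq_finrank_range_toLin B _ _
  set V := LinearMap.ker g with hV
  set dV := Module.finrank ℝ V with hdV
  have hrn : Module.finrank ℝ (LinearMap.range g) + dV = Fintype.card ι := by
    rw [hdV, hV]
    rw [LinearMap.finrank_range_add_finrank_ker g, finrank_euclideanSpace]
  have hcard_le : Fintype.card ι ≤ K + dV := by omega
  have hdV_le : dV ≤ Fintype.card ι := by omega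
  let onb := stdOrthonormalBasis ℝ V
  let w : Fin dV → EuclideanSpace ℝ ι := fun i => ((onb i : V) : EuclideanSpace ℝ ι)
  have hwinner : ∀ i i', (inner ℝ (w i) (w i') : ℝ) = if i = i' then 1 else 0 := by
    intro i i'
    rw [← Submodule.coe_inner]
    exact orthonormal_iff_ite.mp onb.orthonormal i i'
  set W : Matrix ι (Fin dV) ℝ := Matrix.of (fun x i => w i x) with hW
  have hWW : Wᵀ * W = 1 := by
    ext i i'
    have := hwinner i i'
    rw [PiLp.inner_apply] at this
    simp [Matrix.mul_apply, Matrix.one_apply, hW] at this ⊢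
    rw [← this]
    exact Finset.sum_congr rfl fun _ _ => mul_comm _ _
  have hBw : ∀ i, B *ᵥ (fun x => w i x) = 0 := by
    intro i
    have hmem : g (w i) = 0 := (onb i).2
    have : B *ᵥ (WithLp.ofLp (w i)) = WithLp.ofLp (g (w i)) :=
      (Matrix.ofLp_toEuclideanLin_apply B (w i)).symm
    rw [hmem] at this
    funext x
    have hx := congrFun this x
    simpa using hx
  have hBW : B * W = 0 := by
    ext x i
    have := congrFun (hBw i) x
    simpa [Matrix.mul_apply, Matrix.mulVec, dotProduct, hW] using this
  set X := M - B with hX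
  set P := W * Wᵀ with hP
  have hPP : P * P = P := by
    rw [hP, Matrix.mul_assoc, ← Matrix.mul_assoc Wᵀ W Wᵀ, hWW, Matrix.one_mul]
  have hPt : Pᵀ = P := by rw [hP, Matrix.transpose_mul, Matrix.transpose_transpose]
  have h1Pt : (1 - P)ᵀ = 1 - P := by
    rw [Matrix.transpose_sub, Matrix.transpose_one, hPt]
  have hQ' : (1 - P) * (1 - P) = 1 - P := by
    calc (1 - P) * (1 - P) = 1 - P - P + P * P := by noncomm_ring
      _ = 1 - P := by rw [hPP]; abel
  have hXtX : (Xᵀ * X).PosSemidef := by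
    have := Matrix.posSemidef_conjTranspose_mul_self X
    simpa [Matrix.conjTranspose_eq_transpose_of_trivial] using this
  have hstep1 : fsq (X * W) ≤ fsq X := by
    rw [fsq_eq_trace, fsq_eq_trace]
    have hdecomp : Xᵀ * X = (Xᵀ * X) * P + (Xᵀ * X) * (1 - P) := by
      rw [← Matrix.mul_add]; simp
    have htrP : Matrix.trace ((X * W)ᵀ * (X * W)) = Matrix.trace ((Xᵀ * X) * P) := by
      have e1 : (X * W)ᵀ * (X * W) = Wᵀ * (Xᵀ * X * W) := by
        rw [Matrix.transpose_mul]; simp only [Matrix.mul_assoc]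
      rw [e1, Matrix.trace_mul_comm, hP]
      simp only [Matrix.mul_assoc]
    have hpos : 0 ≤ Matrix.trace ((Xᵀ * X) * (1 - P)) := by
      have h1 : (Xᵀ * X) * (1 - P) = (Xᵀ * X) * (1 - P) * (1 - P) := by
        rw [Matrix.mul_assoc (Xᵀ * X) (1 - P) (1 - P), hQ']
      rw [h1, Matrix.trace_mul_cycle]
      apply psd_trace_nonneg
      have h2 := hXtX.mul_mul_conjTranspose_same (1 - P)
      rw [Matrix.conjTranspose_eq_transpose_of_trivial, h1Pt] at h2
      exact h2
    calc Matrix.trace ((X * W)ᵀ * (X * W)) = Matrix.trace ((Xᵀ * X) * P) := htrP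
      _ ≤ Matrix.trace ((Xᵀ * X) * P) + Matrix.trace ((Xᵀ * X) * (1 - P)) :=
          le_add_of_nonneg_right hpos
      _ = Matrix.trace (Xᵀ * X) := by rw [← Matrix.trace_add, ← hdecomp]
  have hXW : X * W = M * W := by rw [hX, Matrix.sub_mul, hBW, sub_zero]
  set Z := Uᵀ * W with hZ
  set c : ι → ℝ := fun j => ∑ i, (Z j i) ^ 2 with hc
  have hMW : M * W = U * (Matrix.diagonal a * Z) := by
    rw [hM, hZ]; simp only [Matrix.mul_assoc]
  have hfsqU : fsq (U * (Matrix.diagonal a * Z)) = fsq (Matrix.diagonal a * Z) := by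
    rw [fsq_eq_trace, fsq_eq_trace, Matrix.transpose_mul]
    rw [show (Matrix.diagonal a * Z)ᵀ * Uᵀ * (U * (Matrix.diagonal a * Z))
        = (Matrix.diagonal a * Z)ᵀ * (Uᵀ * U) * (Matrix.diagonal a * Z) by
      simp only [Matrix.mul_assoc]]
    rw [hU, Matrix.mul_one]
  have hfsqD : fsq (Matrix.diagonal a * Z) = ∑ j, a j ^ 2 * c j := by
    rw [fsq, hc]
    simp only [Matrix.diagonal_mul, Finset.mul_sum]
    exact Finset.sum_congr rfl fun j _ => Finset.sum_congr rfl fun i _ => by ring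
  have hZZt : ∀ j, (Z * Zᵀ) j j = c j := by
    intro j
    simp [Matrix.mul_apply, hc, sq]
  have hZc : ∀ j, c j ≤ 1 := by
    intro j
    have hUUt : U * Uᵀ = 1 := mul_eq_one_comm.mp hU
    have hpsd : (Uᵀ * (1 - P) * U).PosSemidef := by
      have h1P : (1 - P).PosSemidef := by
        have := Matrix.posSemidef_conjTranspose_mul_self (1 - P)
        rw [Matrix.conjTranspose_eq_transpose_of_trivial, h1Pt, hQ'] at this
        exact this
      have := h1P.mul_mul_conjTranspose_same Uᵀ
      simpa [Matrix.conjTranspose_eq_transpose_of_trivial, Matrix.transpose_transpose] using this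
    have hdiag : 0 ≤ (Uᵀ * (1 - P) * U) j j := by
      have := hpsd.dotProduct_mulVec_nonneg (Pi.single j 1)
      simpa [dotProduct, Matrix.mulVec, Pi.single_apply] using this
    have hexp : Uᵀ * (1 - P) * U = 1 - Z * Zᵀ := by
      rw [Matrix.mul_sub, Matrix.sub_mul, Matrix.mul_one, hU, hZ, hP]
      rw [Matrix.transpose_mul, Matrix.transpose_transpose]
      simp only [Matrix.mul_assoc]
    rw [hexp] at hdiag
    have heq : ((1 : Matrix ι ι ℝ) - Z * Zᵀ) j j = 1 - (Z * Zᵀ) j j := by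
      simp [Matrix.sub_apply]
    rw [heq, hZZt j] at hdiag
    linarith
  have hZsum : ∑ j, c j = (dV : ℝ) := by
    have h1 : ∑ j, c j = Matrix.trace (Z * Zᵀ) := by
      rw [Matrix.trace]
      exact (Finset.sum_congr rfl fun j _ => (hZZt j)).symm
    rw [h1, Matrix.trace_mul_comm, hZ, Matrix.transpose_mul, Matrix.transpose_transpose]
    rw [show Wᵀ * U * (Uᵀ * W) = Wᵀ * (U * Uᵀ) * W by simp only [Matrix.mul_assoc]]
    rw [mul_eq_one_comm.mp hU, Matrix.mul_one, hWW]
    simp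
  have hc0 : ∀ j, 0 ≤ c j := fun j => Finset.sum_nonneg fun i _ => sq_nonneg _
  obtain ⟨J, hJcard, hJle⟩ := select_subset (fun j => a j ^ 2) c
    (fun j => sq_nonneg _) hc0 hZc dV hZsum hdV_le
  refine ⟨Jᶜ, ?_, ?_⟩
  · rw [Finset.card_compl, hJcard]; omega
  · rw [compl_compl]
    calc ∑ j ∈ J, a j ^ 2 ≤ ∑ j, a j ^ 2 * c j := hJle
      _ = fsq (M * W) := by rw [hMW, hfsqU, hfsqD]
      _ = fsq (X * W) := by rw [hXW]
      _ ≤ fsq X := hstep1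

open Kronecker in
/-- For real symmetric PSD matrices `S_A`, `S_B` and `0 < ε < 1`, if
`rank_{√ε}(S_A) = R_A > 1` and `rank_{√ε}(S_B) = R_B > 1` (effective ranks in Frobenius norm),
then the Kronecker product satisfies `rank_ε(S_A ⊗ S_B) ≥ R_A · R_B`. -/
theorem erankM_kronecker_ge {m n : Type*} [Fintype m] [Fintype n] [DecidableEq m] [DecidableEq n]
    (SA : Matrix m m ℝ) (SB : Matrix n n ℝ) (hSA : SA.PosSemidef) (hSB : SB.PosSemidef)
    (ε : ℝ) (hε0 : 0 < ε) (hε1 : ε < 1) (RA RB : ℕ)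
    (hRA : erankM (Real.sqrt ε) SA = RA) (hRB : erankM (Real.sqrt ε) SB = RB)
    (hRA1 : 1 < RA) (hRB1 : 1 < RB) :
    RA * RB ≤ erankM ε (SA ⊗ₖ SB) := by
  classical
  set M := SA ⊗ₖ SB with hMdef
  -- the infimum is attained
  have hne : ∃ K, K ∈ {K : ℕ | ∃ B : Matrix (m × n) (m × n) ℝ, B.rank ≤ K ∧ frobM (M - B) ≤ ε} := by
    refine ⟨Fintype.card (m × n), M, ?_, ?_⟩
    · exact Matrix.rank_le_card_width M
    · simp [frobM]
      positivity
  have hmem := Nat.sInf_mem hne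
  obtain ⟨B, hBrank, hBfrob⟩ := hmem
  by_contra hcon
  push_neg at hcon
  -- eigen-data of the factors
  have hA : SA.IsHermitian := hSA.1
  have hB' : SB.IsHermitian := hSB.1
  set UA : Matrix m m ℝ := (hA.eigenvectorUnitary : Matrix m m ℝ) with hUAdef
  set UB : Matrix n n ℝ := (hB'.eigenvectorUnitary : Matrix n n ℝ) with hUBdef
  have hUA : UAᵀ * UA = 1 := by
    have := (Matrix.mem_unitaryGroup_iff').mp hA.eigenvectorUnitary.2
    simpa [Matrix.star_eq_conjTranspose, Matrix.conjTranspose_eq_transpose_of_trivial] using this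
  have hUB : UBᵀ * UB = 1 := by
    have := (Matrix.mem_unitaryGroup_iff').mp hB'.eigenvectorUnitary.2
    simpa [Matrix.star_eq_conjTranspose, Matrix.conjTranspose_eq_transpose_of_trivial] using this
  have hspecA : SA = UA * diagonal hA.eigenvalues * UAᵀ := by
    have := hA.spectral_theorem
    simpa [Matrix.star_eq_conjTranspose, Matrix.conjTranspose_eq_transpose_of_trivial] using this
  have hspecB : SB = UB * diagonal hB'.eigenvalues * UBᵀ := by
    have := hB'.spectral_theorem
    simpa [Matrix.star_eq_conjTranspose, Matrix.conjTranspose_eq_transpose_of_trivial] using this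
  -- tail facts for the factors
  have tailA : ∀ T : Finset m, T.card ≤ RA - 1 → ε < ∑ r ∈ Tᶜ, (hA.eigenvalues r) ^ 2 := by
    intro T hT
    obtain ⟨B', hrank', hfsq'⟩ := achiev hA T
    have hnotmem : (RA - 1) ∉ {K : ℕ | ∃ C : Matrix m m ℝ, C.rank ≤ K ∧
        frobM (SA - C) ≤ Real.sqrt ε} := by
      intro hmem'
      have h2 : erankM (Real.sqrt ε) SA ≤ RA - 1 := Nat.sInf_le hmem'
      omega
    have hgt : Real.sqrt ε < frobM (SA - B') := by
      by_contra hle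
      push_neg at hle
      exact hnotmem ⟨B', le_trans hrank' hT, hle⟩
    have := Real.lt_sq_of_sqrt_lt hgt
    rw [frob_sq, hfsq'] at this
    exact this
  have tailB : ∀ T : Finset n, T.card ≤ RB - 1 → ε < ∑ s ∈ Tᶜ, (hB'.eigenvalues s) ^ 2 := by
    intro T hT
    obtain ⟨B', hrank', hfsq'⟩ := achiev hB' T
    have hnotmem : (RB - 1) ∉ {K : ℕ | ∃ C : Matrix n n ℝ, C.rank ≤ K ∧
        frobM (SB - C) ≤ Real.sqrt ε} := by
      intro hmem'
      have h2 : erankM (Real.sqrt ε) SB ≤ RB - 1 := Nat.sInf_le hmem'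
      omega
    have hgt : Real.sqrt ε < frobM (SB - B') := by
      by_contra hle
      push_neg at hle
      exact hnotmem ⟨B', le_trans hrank' hT, hle⟩
    have := Real.lt_sq_of_sqrt_lt hgt
    rw [frob_sq, hfsq'] at this
    exact this
  -- Kronecker spectral decomposition
  have hkron : M = (UA ⊗ₖ UB) * diagonal (fun p : m × n => hA.eigenvalues p.1 * hB'.eigenvalues p.2)
      * (UA ⊗ₖ UB)ᵀ := by
    rw [hMdef]
    nth_rewrite 1 [hspecA, hspecB]
    rw [Matrix.mul_kronecker_mul, Matrix.mul_kronecker_mul,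
      Matrix.diagonal_kronecker_diagonal, Matrix.kroneckerMap_transpose]
  have hUk : (UA ⊗ₖ UB)ᵀ * (UA ⊗ₖ UB) = 1 := by
    rw [← Matrix.kroneckerMap_transpose, ← Matrix.mul_kronecker_mul, hUA, hUB,
      Matrix.one_kronecker_one]
  -- lower bound on the error of B
  obtain ⟨T, hTcard, hTsum⟩ := lower_bound M (UA ⊗ₖ UB) B _ hUk hkron _ hBrank
  have hTlt : T.card < RA * RB := lt_of_le_of_lt hTcard hcon
  have hkey := prod_tail (fun r => (hA.eigenvalues r) ^ 2) (fun s => (hB'.eigenvalues s) ^ 2)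
    (fun r => sq_nonneg _) (fun s => sq_nonneg _) ε hε0 RA RB tailA tailB T hTlt
  have hsum_eq : ∑ p ∈ Tᶜ, (hA.eigenvalues p.1) ^ 2 * (hB'.eigenvalues p.2) ^ 2
      = ∑ p ∈ Tᶜ, ((fun p : m × n => hA.eigenvalues p.1 * hB'.eigenvalues p.2) p) ^ 2 :=
    Finset.sum_congr rfl fun p _ => by ring
  have hub : fsq (M - B) ≤ ε * ε := by
    have h1 : frobM (M - B) ^ 2 ≤ ε ^ 2 :=
      pow_le_pow_left₀ (frobM_nonneg _) hBfrob 2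
    rw [frob_sq] at h1
    calc fsq (M - B) ≤ ε ^ 2 := h1
      _ = ε * ε := sq ε
  rw [hsum_eq] at hkey
  linarith [hTsum, hkey, hub]
end

section
/- Let S be an N × N real symmetric PSD matrix with unit diagonal (S_{μμ} = 1 for all μ) whose largest eigenvalue is at most K. Then for any 0 < ε < 1, the ε-effective rank of S satisfies rank_ε(S) ≥ (1 − ε²)·N/K². Consequently rank_ε(S) grows at least linearly in N when K is bounded independently of N. -/
open Matrix LinearMap

lemma exists_proj_matrix {n : Type*} [Fintype n] [DecidableEq n] (B : Matrix n n ℝ) :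
    ∃ p : Matrix n n ℝ, p.IsHermitian ∧ p * p = p ∧ B * (1 - p) = 0 ∧
      p.trace = (B.rank : ℝ) := by
  set U : Submodule ℝ (EuclideanSpace ℝ n) := (LinearMap.ker (Matrix.toEuclideanLin B))ᗮ with hU
  set P : (EuclideanSpace ℝ n) →ₗ[ℝ] (EuclideanSpace ℝ n) := U.subtype ∘ₗ (U.orthogonalProjectionOnto : (EuclideanSpace ℝ n) →L[ℝ] U).toLinearMap with hP
  have hPapply : ∀ x : EuclideanSpace ℝ n, P x = (U.orthogonalProjectionOnto x : EuclideanSpace ℝ n) := fun x => rfl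
  have hfix : ∀ x : EuclideanSpace ℝ n, x ∈ U → P x = x := by
    intro x hx
    have h2 := Submodule.orthogonalProjectionOnto_mem_subspace_eq_self (K := U) ⟨x, hx⟩
    rw [hPapply]
    exact congrArg Subtype.val h2
  have hmul : ∀ A C : Matrix n n ℝ, Matrix.toEuclideanLin (A * C)
      = (Matrix.toEuclideanLin A) ∘ₗ (Matrix.toEuclideanLin C) := by
    intro A C
    rw [Matrix.toEuclideanLin_eq_toLin_orthonormal,
      Matrix.toLin_mul _ ((EuclideanSpace.basisFun n ℝ).toBasis) _]
  refine ⟨Matrix.toEuclideanLin.symm P, ?_, ?_, ?_, ?_⟩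
  · rw [Matrix.isHermitian_iff_isSymmetric, LinearEquiv.apply_symm_apply]
    intro x y
    exact Submodule.inner_starProjection_left_eq_right U x y
  · apply Matrix.toEuclideanLin.injective
    rw [hmul, LinearEquiv.apply_symm_apply]
    refine LinearMap.ext fun x => ?_
    exact hfix (P x) (hPapply x ▸ (U.orthogonalProjectionOnto x).2)
  · apply Matrix.toEuclideanLin.injective
    rw [hmul, map_zero, map_sub, LinearEquiv.apply_symm_apply]
    refine LinearMap.ext fun x => ?_
    have h4 : Uᗮ = LinearMap.ker (Matrix.toEuclideanLin B) := by
      rw [hU]; exact Submodule.orthogonal_orthogonal _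
    have hmem : x - P x ∈ LinearMap.ker (Matrix.toEuclideanLin B) :=
      h4 ▸ (by rw [hPapply x]; exact Submodule.sub_starProjection_mem_orthogonal x)
    have hone : Matrix.toEuclideanLin (1 : Matrix n n ℝ) = LinearMap.id := by
      rw [Matrix.toEuclideanLin_eq_toLin_orthonormal, Matrix.toLin_one]
    simp only [LinearMap.comp_apply, LinearMap.sub_apply, hone, LinearMap.id_apply,
      LinearMap.zero_apply]
    simpa [map_sub] using hmem
  · have hproj : LinearMap.IsProj U P :=
      ⟨fun x => hPapply x ▸ (U.orthogonalProjectionOnto x).2, hfix⟩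
    have htr : Matrix.trace (Matrix.toEuclideanLin.symm P) = LinearMap.trace ℝ (EuclideanSpace ℝ n) P := by
      rw [LinearMap.trace_eq_matrix_trace ℝ ((EuclideanSpace.basisFun n ℝ).toBasis) P]
      congr 1
    rw [htr, hproj.trace]
    congr 1
    have h1 : B.rank = Module.finrank ℝ (LinearMap.range (Matrix.toEuclideanLin B)) := by
      rw [Matrix.rank_eq_finrank_range_toLin B ((EuclideanSpace.basisFun n ℝ).toBasis)
        ((EuclideanSpace.basisFun n ℝ).toBasis), ← Matrix.toEuclideanLin_eq_toLin_orthonormal]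
    have h2 := LinearMap.finrank_range_add_finrank_ker (Matrix.toEuclideanLin B)
    have h3 := Submodule.finrank_add_finrank_orthogonal
      (K := LinearMap.ker (Matrix.toEuclideanLin B)) (𝕜 := ℝ) (E := EuclideanSpace ℝ n)
    rw [hU]
    rw [h1]
    simp only [finrank_euclideanSpace] at h2 h3
    omega

lemma trace_transpose_mul_self_eq {n : Type*} [Fintype n] (A : Matrix n n ℝ) :
    (Aᵀ * A).trace = ∑ i, ∑ j, (A i j) ^ 2 := by
  simp only [Matrix.trace, Matrix.diag, Matrix.mul_apply, Matrix.transpose_apply, sq]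
  rw [Finset.sum_comm]

lemma trace_transpose_mul_self_nonneg {n : Type*} [Fintype n] (A : Matrix n n ℝ) :
    0 ≤ (Aᵀ * A).trace := by
  rw [trace_transpose_mul_self_eq]
  exact Finset.sum_nonneg fun i _ => Finset.sum_nonneg fun j _ => sq_nonneg _

lemma psd_trace_nonneg_s13 {n : Type*} [Fintype n] [DecidableEq n] {M : Matrix n n ℝ}
    (hM : M.PosSemidef) : 0 ≤ M.trace := by
  refine Finset.sum_nonneg fun i _ => ?_
  exact hM.diag_nonneg

lemma smul_one_sub_sq_posSemidef {n : Type*} [Fintype n] [DecidableEq n]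
    {S : Matrix n n ℝ} (hS : S.PosSemidef) {K : ℝ}
    (hK : ∀ i, hS.1.eigenvalues i ≤ K) :
    (K ^ 2 • (1 : Matrix n n ℝ) - S * S).PosSemidef := by
  have hH := hS.1
  set V : Matrix n n ℝ := (Matrix.IsHermitian.eigenvectorUnitary hH : Matrix n n ℝ) with hV
  have hVV : V * star V = 1 := Matrix.mem_unitaryGroup_iff.mp (Matrix.IsHermitian.eigenvectorUnitary hH).2
  have hVV' : star V * V = 1 := Matrix.mem_unitaryGroup_iff'.mp (Matrix.IsHermitian.eigenvectorUnitary hH).2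
  have cancel : ∀ X : Matrix n n ℝ, star V * (V * X) = X := fun X => by
    rw [← Matrix.mul_assoc, hVV', Matrix.one_mul]
  have hdecomp : S = V * Matrix.diagonal hH.eigenvalues * star V := by
    conv_lhs => rw [hH.spectral_theorem]
    simp [RCLike.ofReal_real_eq_id, Function.comp_def]
    rfl
  have hconst : ∀ c : ℝ, V * Matrix.diagonal (fun _ : n => c) * star V
      = c • (1 : Matrix n n ℝ) := by
    intro c
    have : Matrix.diagonal (fun _ : n => c) = c • (1 : Matrix n n ℝ) := by
      ext i j
      by_cases h : i = j <;> simp [Matrix.diagonal_apply, Matrix.one_apply, h]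
    rw [this, Matrix.mul_smul, Matrix.smul_mul, Matrix.mul_one, hVV]
  have hSS : S * S = V * (Matrix.diagonal hH.eigenvalues * Matrix.diagonal hH.eigenvalues)
      * star V := by
    conv_lhs => rw [hdecomp]
    simp only [Matrix.mul_assoc]
    rw [cancel]
  have key : K ^ 2 • (1 : Matrix n n ℝ) - S * S
      = V * Matrix.diagonal (fun i => K ^ 2 - hH.eigenvalues i * hH.eigenvalues i) * star V := by
    have hsplit : Matrix.diagonal (fun i => K ^ 2 - hH.eigenvalues i * hH.eigenvalues i)
        = Matrix.diagonal (fun _ : n => K ^ 2)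
          - Matrix.diagonal (fun i => hH.eigenvalues i * hH.eigenvalues i) := by
      rw [← Matrix.diagonal_sub]
    rw [hsplit, Matrix.mul_sub, Matrix.sub_mul, hconst, hSS, Matrix.diagonal_mul_diagonal]
  rw [key]
  have hdiag : (Matrix.diagonal
      (fun i => K ^ 2 - hH.eigenvalues i * hH.eigenvalues i)).PosSemidef := by
    refine Matrix.PosSemidef.diagonal ?_
    intro i
    have h0 := hS.eigenvalues_nonneg i
    have h1 := hK i
    simp only [Pi.zero_apply]
    nlinarith
  have h2 := hdiag.mul_mul_conjTranspose_same V
  rw [Matrix.star_eq_conjTranspose]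
  exact h2

lemma main_ineq {n : Type*} [Fintype n] [DecidableEq n]
    (S : Matrix n n ℝ) (hS : S.PosSemidef) (hdiag : ∀ i, S i i = 1)
    (K : ℝ) (hK : ∀ i, hS.1.eigenvalues i ≤ K) (B : Matrix n n ℝ) :
    (Fintype.card n : ℝ) ≤ (∑ i, ∑ j, ((S - B) i j) ^ 2) + K ^ 2 * B.rank := by
  obtain ⟨p, hp_herm, hpp, hBq, hptr⟩ := exists_proj_matrix B
  have hpT : pᵀ = p := by
    rw [← Matrix.conjTranspose_eq_transpose_of_trivial]; exact hp_herm
  have hST : Sᵀ = S := by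
    rw [← Matrix.conjTranspose_eq_transpose_of_trivial]; exact hS.1
  set q : Matrix n n ℝ := 1 - p with hq
  have hqT : qᵀ = q := by
    rw [hq, Matrix.transpose_sub, Matrix.transpose_one, hpT]
  have hqq : q * q = q := by
    rw [hq]
    simp only [Matrix.mul_sub, Matrix.sub_mul, Matrix.mul_one, Matrix.one_mul, hpp]
    abel
  -- general cyclic identity
  have e1 : ∀ (C r : Matrix n n ℝ), rᵀ = r → r * r = r →
      ((C * r)ᵀ * (C * r)).trace = (Cᵀ * C * r).trace := by
    intro C r hrT hrr
    rw [Matrix.transpose_mul, hrT]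
    calc (r * Cᵀ * (C * r)).trace
        = ((C * r) * (r * Cᵀ)).trace := Matrix.trace_mul_comm _ _
      _ = (C * (r * (r * Cᵀ))).trace := by simp only [Matrix.mul_assoc]
      _ = (C * (r * Cᵀ)).trace := by rw [← Matrix.mul_assoc r r, hrr]
      _ = ((r * Cᵀ) * C).trace := Matrix.trace_mul_comm _ _
      _ = (Cᵀ * C * r).trace := by
          rw [Matrix.mul_assoc, Matrix.trace_mul_comm, Matrix.mul_assoc]
  set A : Matrix n n ℝ := S - B with hA
  -- split the trace of AᵀA
  have hsplit : (Aᵀ * A).trace = (Aᵀ * A * q).trace + (Aᵀ * A * p).trace := by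
    rw [← Matrix.trace_add, ← Matrix.mul_add, hq, sub_add_cancel, Matrix.mul_one]
  have hApos : 0 ≤ (Aᵀ * A * p).trace := by
    rw [← e1 A p hpT hpp]
    exact trace_transpose_mul_self_nonneg _
  have hAq : A * q = S * q := by
    rw [hA, Matrix.sub_mul, hq, hBq, sub_zero]
  have h1 : (Sᵀ * S * q).trace ≤ (Aᵀ * A).trace := by
    rw [hsplit, ← e1 A q hqT hqq, hAq, e1 S q hqT hqq]
    exact le_add_of_nonneg_right hApos
  -- bound the p part of S
  have hpsd := (smul_one_sub_sq_posSemidef hS hK).conjTranspose_mul_mul_same p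
  have htr0 : 0 ≤ (pᴴ * (K ^ 2 • (1 : Matrix n n ℝ) - S * S) * p).trace :=
    psd_trace_nonneg_s13 hpsd
  have hpH : pᴴ = p := hp_herm
  have hSp : (S * S * p).trace ≤ K ^ 2 * p.trace := by
    rw [hpH] at htr0
    have hexp : p * (K ^ 2 • (1 : Matrix n n ℝ) - S * S) * p
        = K ^ 2 • p - p * (S * S) * p := by
      rw [Matrix.mul_sub, Matrix.sub_mul, Matrix.mul_smul, Matrix.mul_one, Matrix.smul_mul, hpp]
    rw [hexp, Matrix.trace_sub, Matrix.trace_smul] at htr0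
    have hcyc : (p * (S * S) * p).trace = (S * S * p).trace := by
      calc (p * (S * S) * p).trace = (p * ((S * S) * p)).trace := by rw [Matrix.mul_assoc]
        _ = (((S * S) * p) * p).trace := Matrix.trace_mul_comm _ _
        _ = ((S * S) * (p * p)).trace := by rw [Matrix.mul_assoc]
        _ = (S * S * p).trace := by rw [hpp]
    rw [hcyc] at htr0
    simpa [smul_eq_mul] using htr0
  -- diagonal lower bound
  have hN : (Fintype.card n : ℝ) ≤ (Sᵀ * S).trace := by
    rw [trace_transpose_mul_self_eq]
    have : ∀ i : n, i ∈ Finset.univ → (1 : ℝ) ≤ ∑ j, (S i j) ^ 2 := by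
      intro i _
      have h := Finset.single_le_sum (f := fun j => (S i j) ^ 2)
        (fun j _ => sq_nonneg _) (Finset.mem_univ i)
      simpa [hdiag i] using h
    calc (Fintype.card n : ℝ) = ∑ _i : n, (1 : ℝ) := by simp
      _ ≤ ∑ i, ∑ j, (S i j) ^ 2 := Finset.sum_le_sum this
  -- assemble
  have hSp' : (Sᵀ * S * p).trace ≤ K ^ 2 * p.trace := by rw [hST]; exact hSp
  have hdec : (Sᵀ * S).trace = (Sᵀ * S * q).trace + (Sᵀ * S * p).trace := by
    rw [← Matrix.trace_add, ← Matrix.mul_add, hq, sub_add_cancel, Matrix.mul_one]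
  have hfinal : (Fintype.card n : ℝ) ≤ (Aᵀ * A).trace + K ^ 2 * p.trace := by
    calc (Fintype.card n : ℝ) ≤ (Sᵀ * S).trace := hN
      _ = (Sᵀ * S * q).trace + (Sᵀ * S * p).trace := hdec
      _ ≤ (Aᵀ * A).trace + K ^ 2 * p.trace := add_le_add h1 hSp'
  rw [trace_transpose_mul_self_eq] at hfinal
  rw [hptr] at hfinal
  exact hfinal

/-- Let `S` be an `N × N` real symmetric PSD matrix with unit diagonal whose
largest eigenvalue is at most `K`. Then for `0 < ε < 1`, `rank_ε(S) ≥ (1 − ε²)·N/K²`. -/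
theorem erankM_ge_of_unit_diag {n : Type*} [Fintype n] [DecidableEq n]
    (S : Matrix n n ℝ) (hS : S.PosSemidef) (hdiag : ∀ i, S i i = 1)
    (K : ℝ) (hK : ∀ i, hS.1.eigenvalues i ≤ K)
    (ε : ℝ) (hε0 : 0 < ε) (hε1 : ε < 1) :
    (1 - ε ^ 2) * (Fintype.card n : ℝ) / K ^ 2 ≤ (erankM ε S : ℝ) := by
  have hne : {k : ℕ | ∃ B : Matrix n n ℝ, B.rank ≤ k ∧ frobM (S - B) ≤ ε}.Nonempty := by
    refine ⟨Fintype.card n, S, Matrix.rank_le_card_width S, ?_⟩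
    simp only [sub_self, frobM]
    have : ∑ i : n, ∑ j : n, ((0 : Matrix n n ℝ) i j) ^ 2 = 0 := by simp
    rw [this, Real.sqrt_zero]
    exact hε0.le
  have hmem := Nat.sInf_mem hne
  obtain ⟨B, hrank, hfrob⟩ := hmem
  have hsum0 : 0 ≤ ∑ i, ∑ j, ((S - B) i j) ^ 2 :=
    Finset.sum_nonneg fun i _ => Finset.sum_nonneg fun j _ => sq_nonneg _
  have hsum : ∑ i, ∑ j, ((S - B) i j) ^ 2 ≤ ε ^ 2 := by
    have h2 := pow_le_pow_left₀ (Real.sqrt_nonneg _) hfrob 2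
    unfold frobM at h2
    rwa [Real.sq_sqrt hsum0] at h2
  have hmain := main_ineq S hS hdiag K hK B
  have hrank' : (B.rank : ℝ) ≤ (erankM ε S : ℝ) := Nat.cast_le.mpr hrank
  rcases isEmpty_or_nonempty n with h | h
  · have hcard : (Fintype.card n : ℝ) = 0 := by simp
    rw [hcard, mul_zero, zero_div]
    exact Nat.cast_nonneg _
  · have hN1 : (1 : ℝ) ≤ (Fintype.card n : ℝ) := by exact_mod_cast Fintype.card_pos
    have hchain : (Fintype.card n : ℝ) ≤ ε ^ 2 + K ^ 2 * (erankM ε S : ℝ) := by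
      have h3 : K ^ 2 * (B.rank : ℝ) ≤ K ^ 2 * (erankM ε S : ℝ) :=
        mul_le_mul_of_nonneg_left hrank' (sq_nonneg K)
      linarith
    have hK2 : 0 < K ^ 2 := by
      rcases lt_or_eq_of_le (sq_nonneg K) with h' | h'
      · exact h'
      · exfalso
        rw [← h'] at hchain
        nlinarith
    rw [div_le_iff₀ hK2]
    nlinarith [mul_nonneg (sq_nonneg ε) (sub_nonneg.mpr hN1)]
end

section
/- Let S be an N × N real symmetric matrix with S_{μμ} = 1 and |S_{μν}| ≤ C e^{−α R_{μν}²} for all μ ≠ ν, where R_{μν} ≥ 0, C > 0, α > 0. Suppose additionally there is d > 0 such that for every μ and every n ∈ ℕ, the number of indices ν with n ≤ R_{μν} < n+1 is at most d(3n² + 3n + 1). Then every eigenvalue of S is at most 1 + C·d·∑_{n=0}^∞ e^{−αn²}(3n² + 3n + 1), a finite bound independent of N. -/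
/-- Let `S` be a real symmetric matrix with unit diagonal, off-diagonal
entries bounded by `C·e^{−α R_{μν}²}`, such that for every `μ` the number of `ν` with
`R_{μν}` in the shell `[k, k+1)` is at most `d(3k² + 3k + 1)`. Then every eigenvalue of `S` is
at most `1 + C·d·∑_{k=0}^∞ e^{−αk²}(3k² + 3k + 1)`. -/
theorem eigenvalue_bound_gershgorin {n : Type*} [Fintype n] [DecidableEq n]
    (S : Matrix n n ℝ) (hS : S.IsHermitian) (hdiag : ∀ μ, S μ μ = 1)
    (Rd : n → n → ℝ) (hRd : ∀ μ ν, 0 ≤ Rd μ ν)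
    (C α d : ℝ) (hC : 0 < C) (hα : 0 < α) (hd : 0 < d)
    (hbound : ∀ μ ν, μ ≠ ν → |S μ ν| ≤ C * Real.exp (-α * (Rd μ ν) ^ 2))
    (hcount : ∀ μ (k : ℕ),
      (Nat.card {ν : n // (k : ℝ) ≤ Rd μ ν ∧ Rd μ ν < (k : ℝ) + 1} : ℝ) ≤
        d * (3 * (k : ℝ) ^ 2 + 3 * k + 1)) :
    ∀ i, hS.eigenvalues i ≤
      1 + C * d * ∑' k : ℕ, Real.exp (-α * (k : ℝ) ^ 2) * (3 * (k : ℝ) ^ 2 + 3 * k + 1) := by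
  classical
  intro i
  have hterm_nonneg : ∀ k : ℕ,
      0 ≤ Real.exp (-α * (k : ℝ) ^ 2) * (3 * (k : ℝ) ^ 2 + 3 * (k : ℝ) + 1) := by
    intro k; positivity
  -- summability of the series
  have hr : ‖Real.exp (-α)‖ < 1 := by
    rw [Real.norm_eq_abs, abs_of_pos (Real.exp_pos _)]
    exact Real.exp_lt_one_iff.mpr (by linarith)
  have hsum : Summable
      (fun k : ℕ => Real.exp (-α * (k : ℝ) ^ 2) * (3 * (k : ℝ) ^ 2 + 3 * (k : ℝ) + 1)) := by
    have h2 := summable_pow_mul_geometric_of_norm_lt_one (R := ℝ) 2 hr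
    have h1 := summable_pow_mul_geometric_of_norm_lt_one (R := ℝ) 1 hr
    have h0 := summable_pow_mul_geometric_of_norm_lt_one (R := ℝ) 0 hr
    have hgeom : Summable
        (fun k : ℕ => (3 * (k : ℝ) ^ 2 + 3 * (k : ℝ) + 1) * Real.exp (-α) ^ k) := by
      have := ((h2.mul_left 3).add (h1.mul_left 3)).add h0
      refine this.congr fun k => ?_
      ring
    refine hgeom.of_nonneg_of_le hterm_nonneg fun k => ?_
    have hexp : Real.exp (-α * (k : ℝ) ^ 2) ≤ Real.exp (-α) ^ k := by
      rw [← Real.exp_nat_mul]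
      apply Real.exp_le_exp.mpr
      have hk2 : (k : ℝ) ≤ (k : ℝ) ^ 2 := by
        have : k ≤ k ^ 2 := Nat.le_self_pow two_ne_zero k
        exact_mod_cast this
      nlinarith
    have hpoly : (0 : ℝ) ≤ 3 * (k : ℝ) ^ 2 + 3 * (k : ℝ) + 1 := by positivity
    rw [mul_comm]
    exact mul_le_mul_of_nonneg_left hexp hpoly
  -- Gershgorin
  have hev : Module.End.HasEigenvalue (Matrix.toLin' S) (hS.eigenvalues i) := by
    have h1 := hS.eigenvalues_mem_spectrum_real i
    rw [Module.End.hasEigenvalue_iff_mem_spectrum]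
    have h2 : (Matrix.toLin' S : Module.End ℝ (n → ℝ)) = Matrix.toLinAlgEquiv' S := rfl
    rw [h2, AlgEquiv.spectrum_eq]
    exact h1
  obtain ⟨μ, hμ⟩ := eigenvalue_mem_ball hev
  rw [Metric.mem_closedBall, Real.dist_eq, hdiag] at hμ
  have he : hS.eigenvalues i ≤ 1 + ∑ j ∈ Finset.univ.erase μ, ‖S μ j‖ := by
    have := abs_le.mp hμ
    linarith [this.2]
  refine he.trans ?_
  have key : ∑ j ∈ Finset.univ.erase μ, ‖S μ j‖ ≤
      C * d * ∑' k : ℕ, Real.exp (-α * (k : ℝ) ^ 2) * (3 * (k : ℝ) ^ 2 + 3 * (k : ℝ) + 1) := by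
    set s := Finset.univ.erase μ with hs
    set f : n → ℕ := fun ν => ⌊Rd μ ν⌋₊ with hf
    have step1 : ∑ j ∈ s, ‖S μ j‖ ≤ ∑ j ∈ s, C * Real.exp (-α * ((f j : ℝ)) ^ 2) := by
      refine Finset.sum_le_sum fun j hj => ?_
      have hjne : j ≠ μ := (Finset.mem_erase.mp hj).1
      have hb := hbound μ j (Ne.symm hjne)
      refine le_trans (by rw [Real.norm_eq_abs]) (hb.trans ?_)
      have hfle : ((f j : ℝ)) ≤ Rd μ j := Nat.floor_le (hRd μ j)
      have : ((f j : ℝ)) ^ 2 ≤ (Rd μ j) ^ 2 :=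
        pow_le_pow_left₀ (Nat.cast_nonneg _) hfle 2
      have := Real.exp_le_exp.mpr (by nlinarith : -α * (Rd μ j) ^ 2 ≤ -α * ((f j : ℝ)) ^ 2)
      nlinarith [Real.exp_pos (-α * (Rd μ j) ^ 2)]
    have step2 : ∑ j ∈ s, C * Real.exp (-α * ((f j : ℝ)) ^ 2) =
        ∑ k ∈ s.image f, (s.filter (fun a => f a = k)).card •
          (C * Real.exp (-α * ((k : ℝ)) ^ 2)) :=
      Finset.sum_comp (fun k : ℕ => C * Real.exp (-α * ((k : ℝ)) ^ 2)) f
    have step3 : ∀ k ∈ s.image f,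
        (s.filter (fun a => f a = k)).card • (C * Real.exp (-α * ((k : ℝ)) ^ 2)) ≤
          C * d * (Real.exp (-α * (k : ℝ) ^ 2) * (3 * (k : ℝ) ^ 2 + 3 * (k : ℝ) + 1)) := by
      intro k _
      have hcard : ((s.filter (fun a => f a = k)).card : ℝ) ≤
          d * (3 * (k : ℝ) ^ 2 + 3 * (k : ℝ) + 1) := by
        refine le_trans ?_ (hcount μ k)
        rw [Nat.card_eq_fintype_card, Fintype.card_subtype]
        have hsub : s.filter (fun a => f a = k) ⊆
            Finset.univ.filter (fun ν => (k : ℝ) ≤ Rd μ ν ∧ Rd μ ν < (k : ℝ) + 1) := by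
          intro a ha
          obtain ⟨-, hfa⟩ := Finset.mem_filter.mp ha
          have := (Nat.floor_eq_iff (hRd μ a)).mp hfa
          exact Finset.mem_filter.mpr ⟨Finset.mem_univ _, this⟩
        exact_mod_cast Finset.card_le_card hsub
      rw [nsmul_eq_mul]
      have hek := Real.exp_pos (-α * (k : ℝ) ^ 2)
      calc ((s.filter (fun a => f a = k)).card : ℝ) * (C * Real.exp (-α * ((k : ℝ)) ^ 2))
          ≤ d * (3 * (k : ℝ) ^ 2 + 3 * (k : ℝ) + 1) * (C * Real.exp (-α * ((k : ℝ)) ^ 2)) := by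
            apply mul_le_mul_of_nonneg_right hcard
            positivity
        _ = C * d * (Real.exp (-α * (k : ℝ) ^ 2) * (3 * (k : ℝ) ^ 2 + 3 * (k : ℝ) + 1)) := by
            ring
    calc ∑ j ∈ s, ‖S μ j‖
        ≤ ∑ j ∈ s, C * Real.exp (-α * ((f j : ℝ)) ^ 2) := step1
      _ = ∑ k ∈ s.image f, (s.filter (fun a => f a = k)).card •
            (C * Real.exp (-α * ((k : ℝ)) ^ 2)) := step2
      _ ≤ ∑ k ∈ s.image f,
            C * d * (Real.exp (-α * (k : ℝ) ^ 2) * (3 * (k : ℝ) ^ 2 + 3 * (k : ℝ) + 1)) :=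
          Finset.sum_le_sum step3
      _ = C * d * ∑ k ∈ s.image f,
            Real.exp (-α * (k : ℝ) ^ 2) * (3 * (k : ℝ) ^ 2 + 3 * (k : ℝ) + 1) := by
          rw [← Finset.mul_sum]
      _ ≤ C * d * ∑' k : ℕ,
            Real.exp (-α * (k : ℝ) ^ 2) * (3 * (k : ℝ) ^ 2 + 3 * (k : ℝ) + 1) := by
          apply mul_le_mul_of_nonneg_left _ (by positivity)
          exact Summable.sum_le_tsum _ (fun k _ => hterm_nonneg k) hsum
  linarith
end
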